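/- If K ⊆ ℝⁿ is a convex body, O ∈ ∂K, e_K is continuous at O, and O' ∈ ∂K satisfies e_K(O) = |OO'|, then O' is an extreme point of K. In particular, e_K is continuous at every extreme point of K. -/

import Mathlib

open scoped RealInnerProductSpace
open Metric Filter

/-- Width of `K` in direction `u`: distance between the two supporting
hyperplanes of `K` orthogonal to the unit vector `u`. -/
noncomputable def widthFn {n : ℕ} (K : Set (EuclideanSpace ℝ (Fin n)))
    (u : EuclideanSpace ℝ (Fin n)) : ℝ :=
  sSup ((fun x => ⟪x, u⟫) '' K) - sInf ((fun x => ⟪x, u⟫) '' K)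

/-- Diameter of `K` in direction `u`: maximal length of a chord of `K` parallel to `u`. -/
noncomputable def dirDiam {n : ℕ} (K : Set (EuclideanSpace ℝ (Fin n)))
    (u : EuclideanSpace ℝ (Fin n)) : ℝ :=
  sSup {d : ℝ | ∃ x ∈ K, ∃ y ∈ K, (∃ t : ℝ, x - y = t • u) ∧ d = dist x y}

/-- Projective spherical distance `ρ(u,v) = arccos |⟨u,v⟩|`. -/
noncomputable def rho {n : ℕ} (u v : EuclideanSpace ℝ (Fin n)) : ℝ :=
  Real.arccos |⟪u, v⟫|

/-- `e_K(O)`: maximal length of a chord of `K` cut by a line through `O`. -/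
noncomputable def eFn {n : ℕ} (K : Set (EuclideanSpace ℝ (Fin n)))
    (O : EuclideanSpace ℝ (Fin n)) : ℝ :=
  sSup {d : ℝ | ∃ x ∈ K, ∃ y ∈ K, Collinear ℝ ({O, x, y} : Set (EuclideanSpace ℝ (Fin n))) ∧
    d = dist x y}

/-- `s_K(u)`: maximal distance between a point of `K` in one supporting hyperplane
orthogonal to `u` and a point of `K` in the other. -/
noncomputable def sFn {n : ℕ} (K : Set (EuclideanSpace ℝ (Fin n)))
    (u : EuclideanSpace ℝ (Fin n)) : ℝ :=
  sSup {d : ℝ | ∃ A ∈ K, ∃ B ∈ K,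
    (∀ x ∈ K, ⟪x, u⟫ ≤ ⟪A, u⟫) ∧ (∀ x ∈ K, ⟪B, u⟫ ≤ ⟪x, u⟫) ∧ d = dist A B}

/-- `r_K(u)`: infimum over diametral chords `[AB]` for `u` and pairs of parallel
supporting hyperplanes `H₁ ∋ A`, `H₂ ∋ B` of the distance between `H₁` and `H₂`. -/
noncomputable def rFn {n : ℕ} (K : Set (EuclideanSpace ℝ (Fin n)))
    (u : EuclideanSpace ℝ (Fin n)) : ℝ :=
  sInf {d : ℝ | ∃ A ∈ K, ∃ B ∈ K, (∃ t : ℝ, A - B = t • u) ∧ dist A B = dirDiam K u ∧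
    ∃ v : EuclideanSpace ℝ (Fin n), ‖v‖ = 1 ∧
      (∀ x ∈ K, ⟪x, v⟫ ≤ ⟪A, v⟫) ∧ (∀ x ∈ K, ⟪B, v⟫ ≤ ⟪x, v⟫) ∧ d = ⟪A - B, v⟫}

variable {n : ℕ}

def chordSet (K : Set (EuclideanSpace ℝ (Fin n))) (q : EuclideanSpace ℝ (Fin n)) : Set ℝ :=
  {d : ℝ | ∃ x ∈ K, ∃ y ∈ K, Collinear ℝ ({q, x, y} : Set (EuclideanSpace ℝ (Fin n))) ∧
    d = dist x y}

lemma eFn_eq (K : Set (EuclideanSpace ℝ (Fin n))) (q : EuclideanSpace ℝ (Fin n)) :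
    eFn K q = sSup (chordSet K q) := rfl

lemma chordSet_bddAbove {K : Set (EuclideanSpace ℝ (Fin n))} (hKc : IsCompact K)
    (q : EuclideanSpace ℝ (Fin n)) : BddAbove (chordSet K q) := by
  obtain ⟨C, hC⟩ := Metric.isBounded_iff.mp hKc.isBounded
  exact ⟨C, by rintro d ⟨x, hx, y, hy, -, rfl⟩; exact hC hx hy⟩

lemma chordSet_nonempty {K : Set (EuclideanSpace ℝ (Fin n))} (hK : K.Nonempty)
    (q : EuclideanSpace ℝ (Fin n)) : (chordSet K q).Nonempty := by
  obtain ⟨z, hz⟩ := hK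
  refine ⟨0, z, hz, z, hz, ?_, by simp⟩
  have : ({q, z, z} : Set (EuclideanSpace ℝ (Fin n))) = {q, z} := by
    simp
  rw [this]; exact collinear_pair ℝ q z

lemma eFn_nonneg {K : Set (EuclideanSpace ℝ (Fin n))} (hKc : IsCompact K) (hK : K.Nonempty)
    (q : EuclideanSpace ℝ (Fin n)) : 0 ≤ eFn K q := by
  obtain ⟨z, hz⟩ := hK
  have h0 : (0:ℝ) ∈ chordSet K q := by
    refine ⟨z, hz, z, hz, ?_, by simp⟩
    have : ({q, z, z} : Set (EuclideanSpace ℝ (Fin n))) = {q, z} := by simp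
    rw [this]; exact collinear_pair ℝ q z
  exact le_csSup (chordSet_bddAbove hKc q) h0

lemma dist_le_eFn {K : Set (EuclideanSpace ℝ (Fin n))} (hKc : IsCompact K)
    {q z : EuclideanSpace ℝ (Fin n)} (hq : q ∈ K) (hz : z ∈ K) : dist q z ≤ eFn K q := by
  have hmem : dist q z ∈ chordSet K q := by
    refine ⟨z, hz, q, hq, ?_, dist_comm q z⟩
    have : ({q, z, q} : Set (EuclideanSpace ℝ (Fin n))) = {q, z} := by
      ext w; constructor <;> (intro hw; simp at hw ⊢; tauto)
    rw [this]; exact collinear_pair ℝ q z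
  exact le_csSup (chordSet_bddAbove hKc q) hmem

lemma collinear_triple_iff (a b c : EuclideanSpace ℝ (Fin n)) :
    Collinear ℝ ({a, b, c} : Set (EuclideanSpace ℝ (Fin n))) ↔
      ⟪b - a, c - a⟫ ^ 2 = ‖b - a‖ ^ 2 * ‖c - a‖ ^ 2 := by
  constructor
  · intro h
    obtain ⟨v, hv⟩ := (collinear_iff_of_mem (Set.mem_insert a _)).mp h
    obtain ⟨rb, hrb⟩ := hv b (by simp)
    obtain ⟨rc, hrc⟩ := hv c (by simp)
    have hb : b - a = rb • v := by rw [hrb]; simp [vadd_eq_add]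
    have hc : c - a = rc • v := by rw [hrc]; simp [vadd_eq_add]
    rw [hb, hc, real_inner_smul_left, real_inner_smul_right, real_inner_self_eq_norm_sq,
      norm_smul, norm_smul]
    simp [Real.norm_eq_abs]
    ring_nf
    rw [sq_abs, sq_abs]
    ring
  · intro h
    by_cases hba : b - a = 0
    · have : b = a := by rwa [sub_eq_zero] at hba
      subst this
      have : ({b, b, c} : Set (EuclideanSpace ℝ (Fin n))) = {b, c} := by simp
      rw [this]; exact collinear_pair ℝ b c
    · -- b ≠ a ; derive c - a = r • (b - a)
      have habs : |⟪b - a, c - a⟫| = ‖b - a‖ * ‖c - a‖ := by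
        have h1 : |⟪b - a, c - a⟫| ^ 2 = (‖b - a‖ * ‖c - a‖) ^ 2 := by
          rw [sq_abs]; rw [h]; ring
        have h2 : (0:ℝ) ≤ ‖b - a‖ * ‖c - a‖ := by positivity
        nlinarith [abs_nonneg (⟪b - a, c - a⟫ : ℝ)]
      have hr : ∃ r : ℝ, c - a = r • (b - a) := by
        have hb0 : ‖b - a‖ ≠ 0 := by simpa using hba
        rcases abs_eq (by positivity : (0:ℝ) ≤ ‖b - a‖ * ‖c - a‖) |>.mp habs with h' | h'
        · have hs := inner_eq_norm_mul_iff_real.mp h'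
          refine ⟨‖c - a‖ / ‖b - a‖, ?_⟩
          rw [div_eq_inv_mul, ← smul_smul, hs, smul_smul, inv_mul_cancel₀ hb0, one_smul]
        · have h'' : ⟪b - a, -(c - a)⟫ = ‖b - a‖ * ‖-(c - a)‖ := by
            rw [inner_neg_right, norm_neg]; linarith
          have hs := inner_eq_norm_mul_iff_real.mp h''
          refine ⟨-(‖c - a‖ / ‖b - a‖), ?_⟩
          have : -(c - a) = (‖c - a‖ / ‖b - a‖) • (b - a) := by
            rw [div_eq_inv_mul, ← smul_smul, norm_neg] at *
            rw [hs, smul_smul, inv_mul_cancel₀ hb0, one_smul]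
          rw [neg_smul, ← this, neg_neg]
      obtain ⟨r, hr⟩ := hr
      apply (collinear_iff_of_mem (Set.mem_insert a _)).mpr
      refine ⟨b - a, ?_⟩
      intro p hp
      rcases hp with rfl | rfl | rfl
      · exact ⟨0, by simp [vadd_eq_add]⟩
      · exact ⟨1, by simp [vadd_eq_add]⟩
      · exact ⟨r, by rw [← hr]; simp [vadd_eq_add]⟩

lemma collinear_limit {a b c : EuclideanSpace ℝ (Fin n)} {qk xk yk : ℕ → EuclideanSpace ℝ (Fin n)}
    (hq : Filter.Tendsto qk atTop (nhds a)) (hx : Filter.Tendsto xk atTop (nhds b))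
    (hy : Filter.Tendsto yk atTop (nhds c))
    (h : ∀ k, Collinear ℝ ({qk k, xk k, yk k} : Set (EuclideanSpace ℝ (Fin n)))) :
    Collinear ℝ ({a, b, c} : Set (EuclideanSpace ℝ (Fin n))) := by
  rw [collinear_triple_iff]
  have hfun : ∀ k, (⟪xk k - qk k, yk k - qk k⟫:ℝ) ^ 2 - ‖xk k - qk k‖ ^ 2 * ‖yk k - qk k‖ ^ 2 = 0 := by
    intro k
    have := (collinear_triple_iff (qk k) (xk k) (yk k)).mp (h k)
    linarith
  have hcont : Filter.Tendsto
      (fun k => (⟪xk k - qk k, yk k - qk k⟫:ℝ) ^ 2 - ‖xk k - qk k‖ ^ 2 * ‖yk k - qk k‖ ^ 2)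
      atTop (nhds ((⟪b - a, c - a⟫:ℝ) ^ 2 - ‖b - a‖ ^ 2 * ‖c - a‖ ^ 2)) := by
    have h1 : Filter.Tendsto (fun k => xk k - qk k) atTop (nhds (b - a)) := hx.sub hq
    have h2 : Filter.Tendsto (fun k => yk k - qk k) atTop (nhds (c - a)) := hy.sub hq
    exact ((Filter.Tendsto.inner h1 h2).pow 2).sub
      (((h1.norm.pow 2)).mul ((h2.norm.pow 2)))
  have : ((⟪b - a, c - a⟫:ℝ) ^ 2 - ‖b - a‖ ^ 2 * ‖c - a‖ ^ 2) = 0 :=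
    tendsto_nhds_unique hcont (by simpa [hfun] using tendsto_const_nhds.congr (fun k => (hfun k).symm))
  linarith

lemma same_sign_abs_sub (rx ry : ℝ) (h : 0 ≤ rx * ry) :
    |rx - ry| ≤ |rx| ∨ |rx - ry| ≤ |ry| := by
  rcases abs_cases rx with ⟨hx, hx'⟩ | ⟨hx, hx'⟩ <;>
  rcases abs_cases ry with ⟨hy, hy'⟩ | ⟨hy, hy'⟩ <;>
  rcases abs_cases (rx - ry) with ⟨hz, hz'⟩ | ⟨hz, hz'⟩ <;>
  [skip; skip; skip; skip; skip; skip; skip; skip] <;>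
  first
    | (left; nlinarith)
    | (right; nlinarith)

lemma extreme_chord_bound {K : Set (EuclideanSpace ℝ (Fin n))}
    {p : EuclideanSpace ℝ (Fin n)} (hp : p ∈ K.extremePoints ℝ)
    {x y : EuclideanSpace ℝ (Fin n)} (hx : x ∈ K) (hy : y ∈ K)
    (hcol : Collinear ℝ ({p, x, y} : Set (EuclideanSpace ℝ (Fin n)))) :
    dist x y ≤ dist p x ∨ dist x y ≤ dist p y := by
  obtain ⟨v, hv⟩ := (collinear_iff_of_mem (Set.mem_insert p _)).mp hcol
  obtain ⟨rx, hrx⟩ := hv x (by simp)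
  obtain ⟨ry, hry⟩ := hv y (by simp)
  have hxv : x = rx • v + p := by simpa [vadd_eq_add] using hrx
  have hyv : y = ry • v + p := by simpa [vadd_eq_add] using hry
  have hdxy : dist x y = |rx - ry| * ‖v‖ := by
    rw [dist_eq_norm, hxv, hyv]
    have : rx • v + p - (ry • v + p) = (rx - ry) • v := by module
    rw [this, norm_smul, Real.norm_eq_abs]
  have hdpx : dist p x = |rx| * ‖v‖ := by
    rw [dist_eq_norm, hxv]
    have : p - (rx • v + p) = (-rx) • v := by module
    rw [this, norm_smul, Real.norm_eq_abs, abs_neg]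
  have hdpy : dist p y = |ry| * ‖v‖ := by
    rw [dist_eq_norm, hyv]
    have : p - (ry • v + p) = (-ry) • v := by module
    rw [this, norm_smul, Real.norm_eq_abs, abs_neg]
  rcases le_or_gt 0 (rx * ry) with hsign | hsign
  · rcases same_sign_abs_sub rx ry hsign with h | h
    · left; rw [hdxy, hdpx]; exact mul_le_mul_of_nonneg_right h (norm_nonneg v)
    · right; rw [hdxy, hdpy]; exact mul_le_mul_of_nonneg_right h (norm_nonneg v)
  · -- opposite signs: p in open segment
    have hseg : p ∈ openSegment ℝ x y := by
      rcases mul_neg_iff.mp hsign with ⟨hrx0, hry0⟩ | ⟨hrx0, hry0⟩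
      · -- rx > 0, ry < 0
        have hd : (0:ℝ) < rx - ry := by linarith
        have hd0 : rx - ry ≠ 0 := ne_of_gt hd
        refine ⟨(-ry) / (rx - ry), rx / (rx - ry),
          div_pos (by linarith) hd, div_pos (by linarith) hd, ?_, ?_⟩
        · field_simp; ring
        · rw [hxv, hyv]
          have hcoef : ((-ry) / (rx - ry)) * rx + (rx / (rx - ry)) * ry = 0 := by
            field_simp; ring
          have hkey : ((-ry) / (rx - ry)) • (rx • v + p) + (rx / (rx - ry)) • (ry • v + p)
              = (((-ry) / (rx - ry)) * rx + (rx / (rx - ry)) * ry) • v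
                + (((-ry) / (rx - ry)) + (rx / (rx - ry))) • p := by module
          rw [hkey, hcoef]
          have hsum : ((-ry) / (rx - ry)) + (rx / (rx - ry)) = 1 := by
            field_simp; ring
          rw [hsum]; simp
      · -- rx < 0, ry > 0
        have hd : (0:ℝ) < ry - rx := by linarith
        have hd0 : ry - rx ≠ 0 := ne_of_gt hd
        refine ⟨ry / (ry - rx), (-rx) / (ry - rx),
          div_pos (by linarith) hd, div_pos (by linarith) hd, ?_, ?_⟩
        · field_simp; ring
        · rw [hxv, hyv]
          have hcoef : (ry / (ry - rx)) * rx + ((-rx) / (ry - rx)) * ry = 0 := by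
            field_simp; ring
          have hkey : (ry / (ry - rx)) • (rx • v + p) + ((-rx) / (ry - rx)) • (ry • v + p)
              = ((ry / (ry - rx)) * rx + ((-rx) / (ry - rx)) * ry) • v
                + ((ry / (ry - rx)) + ((-rx) / (ry - rx))) • p := by module
          rw [hkey, hcoef]
          have hsum : (ry / (ry - rx)) + ((-rx) / (ry - rx)) = 1 := by
            field_simp; ring
          rw [hsum]; simp
    obtain ⟨hxp, hyp⟩ := (mem_extremePoints.mp hp).2 x hx y hy hseg
    left
    rw [hxp, hyp]

lemma ball_combo {K : Set (EuclideanSpace ℝ (Fin n))} (hKconv : Convex ℝ K)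
    {c : EuclideanSpace ℝ (Fin n)} {r : ℝ} (hball : ball c r ⊆ K)
    {x' : EuclideanSpace ℝ (Fin n)} (hx' : x' ∈ K) {l : ℝ} (hl0 : 0 < l) (hl1 : l ≤ 1) :
    ball ((1 - l) • x' + l • c) (l * r) ⊆ K := by
  intro z hz
  have hzb : c + l⁻¹ • (z - ((1 - l) • x' + l • c)) ∈ ball c r := by
    rw [mem_ball, dist_eq_norm]
    have : c + l⁻¹ • (z - ((1 - l) • x' + l • c)) - c = l⁻¹ • (z - ((1 - l) • x' + l • c)) := by
      module
    rw [this, norm_smul, Real.norm_eq_abs, abs_inv, abs_of_pos hl0]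
    rw [mem_ball, dist_eq_norm] at hz
    calc l⁻¹ * ‖z - ((1 - l) • x' + l • c)‖ < l⁻¹ * (l * r) :=
          mul_lt_mul_of_pos_left hz (by positivity)
      _ = r := by field_simp
  have := hKconv hx' (hball hzb) (by linarith : (0:ℝ) ≤ 1 - l) (le_of_lt hl0) (by ring)
  have heq : (1 - l) • x' + l • (c + l⁻¹ • (z - ((1 - l) • x' + l • c))) = z := by
    rw [smul_add, smul_smul, mul_inv_cancel₀ (ne_of_gt hl0), one_smul]
    module
  rwa [heq] at this

lemma eFn_usc {K : Set (EuclideanSpace ℝ (Fin n))} (hKc : IsCompact K) (hK : K.Nonempty)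
    (p : EuclideanSpace ℝ (Fin n)) {e : ℝ} (he : 0 < e) :
    ∃ d > 0, ∀ q : EuclideanSpace ℝ (Fin n), dist q p < d → eFn K q ≤ eFn K p + e := by
  by_contra hcon
  push_neg at hcon
  have hexq : ∀ k : ℕ, ∃ q, dist q p < 1/(k+1) ∧ eFn K p + e < eFn K q := by
    intro k
    obtain ⟨q, hq1, hq2⟩ := hcon (1/(k+1)) (by positivity)
    exact ⟨q, hq1, hq2⟩
  choose q hqd hqe using hexq
  have hex2 : ∀ k : ℕ, ∃ x, x ∈ K ∧ ∃ y, y ∈ K ∧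
      Collinear ℝ ({q k, x, y} : Set (EuclideanSpace ℝ (Fin n))) ∧ eFn K p + e < dist x y := by
    intro k
    obtain ⟨d, hd, hlt⟩ := exists_lt_of_lt_csSup (chordSet_nonempty hK (q k)) (hqe k)
    obtain ⟨x, hx, y, hy, hcol, rfl⟩ := hd
    exact ⟨x, hx, y, hy, hcol, hlt⟩
  choose x hxK y hyK hcol hlt using hex2
  obtain ⟨⟨X, Y⟩, hXY, φ, hφ, hconv⟩ := (hKc.prod hKc).tendsto_subseq
    (x := fun k => (x k, y k)) (fun k => Set.mk_mem_prod (hxK k) (hyK k))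
  have hXf : Filter.Tendsto (fun k => x (φ k)) atTop (nhds X) :=
    (continuous_fst.tendsto _).comp hconv
  have hYf : Filter.Tendsto (fun k => y (φ k)) atTop (nhds Y) :=
    (continuous_snd.tendsto _).comp hconv
  have hqf : Filter.Tendsto (fun k => q (φ k)) atTop (nhds p) := by
    rw [tendsto_iff_dist_tendsto_zero]
    apply squeeze_zero (fun k => dist_nonneg)
      (g := fun k : ℕ => 1/(k+1))
      (fun k => ?_) tendsto_one_div_add_atTop_nhds_zero_nat
    have h1 : dist (q (φ k)) p < 1/((φ k : ℝ)+1) := hqd (φ k)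
    have h2 : (1:ℝ)/((φ k : ℝ)+1) ≤ 1/((k : ℝ)+1) := by
      apply one_div_le_one_div_of_le (by positivity)
      have hk : (k:ℝ) ≤ (φ k : ℝ) := by exact_mod_cast hφ.le_apply
      linarith
    linarith
  have hcolP : Collinear ℝ ({p, X, Y} : Set (EuclideanSpace ℝ (Fin n))) :=
    collinear_limit hqf hXf hYf (fun k => hcol (φ k))
  have hdXY : eFn K p + e ≤ dist X Y := by
    have htend : Filter.Tendsto (fun k => dist (x (φ k)) (y (φ k))) atTop (nhds (dist X Y)) :=
      hXf.dist hYf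
    exact ge_of_tendsto htend (Filter.Eventually.of_forall (fun k => (hlt (φ k)).le))
  have hmem : dist X Y ∈ chordSet K p :=
    ⟨X, (Set.mem_prod.mp hXY).1, Y, (Set.mem_prod.mp hXY).2, hcolP, rfl⟩
  have : dist X Y ≤ eFn K p := le_csSup (chordSet_bddAbove hKc p) hmem
  linarith

set_option maxHeartbeats 1000000 in
lemma eFn_lsc_extreme {K : Set (EuclideanSpace ℝ (Fin n))} (hKc : IsCompact K)
    (hKconv : Convex ℝ K) (hKint : (interior K).Nonempty)
    {p : EuclideanSpace ℝ (Fin n)} (hp : p ∈ K.extremePoints ℝ) {e : ℝ} (he : 0 < e) :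
    ∃ d > 0, ∀ q : EuclideanSpace ℝ (Fin n), dist q p < d → eFn K p - e ≤ eFn K q := by
  obtain ⟨c, hc⟩ := hKint
  obtain ⟨r, hr0, hrK⟩ : ∃ r > 0, ball c r ⊆ K := by
    obtain ⟨r, hr0, hrK⟩ := Metric.isOpen_iff.mp isOpen_interior c hc
    exact ⟨r, hr0, hrK.trans interior_subset⟩
  have hcK : c ∈ K := interior_subset hc
  have hpK : p ∈ K := hp.1
  have hKne : K.Nonempty := ⟨p, hpK⟩
  by_cases htriv : eFn K p ≤ e
  · exact ⟨1, one_pos, fun q _ => by linarith [eFn_nonneg hKc hKne q]⟩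
  push_neg at htriv
  have himne : ((fun z => dist p z) '' K).Nonempty := ⟨dist p p, p, hpK, rfl⟩
  have himbdd : BddAbove ((fun z => dist p z) '' K) := by
    obtain ⟨C, hC⟩ := Metric.isBounded_iff.mp hKc.isBounded
    exact ⟨C, by rintro d ⟨z, hz, rfl⟩; exact hC hpK hz⟩
  have hEf : eFn K p ≤ sSup ((fun z => dist p z) '' K) := by
    apply csSup_le (chordSet_nonempty hKne p)
    rintro d ⟨x, hx, y, hy, hcol, rfl⟩
    rcases extreme_chord_bound hp hx hy hcol with h | h
    · exact h.trans (le_csSup himbdd ⟨x, hx, rfl⟩)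
    · exact h.trans (le_csSup himbdd ⟨y, hy, rfl⟩)
  obtain ⟨d0, hd0mem, hz⟩ := exists_lt_of_lt_csSup himne
    (lt_of_lt_of_le (by linarith : eFn K p - e/4 < eFn K p) hEf)
  obtain ⟨z, hzK, rfl⟩ := hd0mem
  set D := dist z c with hD
  set P := dist p z with hP
  have hD0 : 0 ≤ D := dist_nonneg
  have hP0 : 0 ≤ P := dist_nonneg
  set s : ℝ := min (e/(4*(D+1))) (1/2) with hs
  have hs0 : 0 < s := lt_min (by positivity) (by norm_num)
  have hs12 : s ≤ 1/2 := min_le_right _ _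
  have hsD : s * D < e/4 := by
    have h1 : s * D ≤ e/(4*(D+1)) * D := mul_le_mul_of_nonneg_right (min_le_left _ _) hD0
    have h2 : e/(4*(D+1)) * D < e/4 := by
      rw [div_mul_eq_mul_div, div_lt_div_iff₀ (by positivity) (by norm_num)]
      nlinarith
    linarith
  set t : ℝ := min (e/(8*(P+D+1))) (1/2) with ht
  have ht0 : 0 < t := lt_min (by positivity) (by norm_num)
  have ht12 : t ≤ 1/2 := min_le_right _ _
  have htP : t * P < e/8 := by
    have h1 : t * P ≤ e/(8*(P+D+1)) * P := mul_le_mul_of_nonneg_right (min_le_left _ _) hP0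
    have h2 : e/(8*(P+D+1)) * P < e/8 := by
      rw [div_mul_eq_mul_div, div_lt_div_iff₀ (by positivity) (by norm_num)]
      nlinarith
    linarith
  set δ : ℝ := min (t*s*r) (e/8) with hδ
  have hδ0 : 0 < δ := lt_min (by positivity) (by positivity)
  have hδe : δ ≤ e/8 := min_le_right _ _
  have hδr : δ ≤ t*s*r := min_le_left _ _
  refine ⟨δ, hδ0, fun q hq => ?_⟩
  set w : EuclideanSpace ℝ (Fin n) := z + s • (c - z) with hw
  set x₁ : EuclideanSpace ℝ (Fin n) := q + t • (w - q) with hx₁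
  have hwcomb : w = (1-s) • z + s • c := by rw [hw]; module
  have hwK : w ∈ K := by
    rw [hwcomb]
    exact hKconv hzK hcK (by linarith) hs0.le (by ring)
  have hts1 : t*s ≤ 1/4 := by nlinarith
  have hts0 : 0 < t*s := by positivity
  have h1ts : (0:ℝ) < 1 - t*s := by linarith
  set x' : EuclideanSpace ℝ (Fin n) :=
    ((1-t)/(1-t*s)) • p + ((t*(1-s))/(1-t*s)) • z with hx'
  have hx'K : x' ∈ K := by
    rw [hx']
    apply hKconv hpK hzK
    · apply div_nonneg (by linarith) h1ts.le
    · apply div_nonneg (by nlinarith) h1ts.le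
    · field_simp
      ring
  have hne0 : 1 - t*s ≠ 0 := ne_of_gt h1ts
  have hx'mul : (1 - t*s) • x' = (1-t) • p + (t*(1-s)) • z := by
    rw [hx', smul_add, smul_smul, smul_smul, mul_div_cancel₀ _ hne0, mul_div_cancel₀ _ hne0]
  have hmeq : (1 - t*s) • x' + (t*s) • c = p + t • (w - p) := by
    rw [hx'mul, hw]
    module
  have hballK : ball (p + t • (w - p)) (t*s*r) ⊆ K := by
    rw [← hmeq]
    exact ball_combo hKconv hrK hx'K hts0 (by linarith)
  have hx₁K : x₁ ∈ K := by
    apply hballK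
    rw [mem_ball, dist_eq_norm]
    have hdiff : x₁ - (p + t • (w - p)) = (1-t) • (q - p) := by rw [hx₁]; module
    rw [hdiff, norm_smul, Real.norm_eq_abs, abs_of_nonneg (by linarith : (0:ℝ) ≤ 1-t)]
    have hqp : ‖q - p‖ < δ := by rw [← dist_eq_norm]; exact hq
    calc (1-t) * ‖q - p‖ ≤ 1 * ‖q - p‖ :=
          mul_le_mul_of_nonneg_right (by linarith) (norm_nonneg _)
      _ = ‖q - p‖ := one_mul _
      _ < δ := hqp
      _ ≤ t*s*r := hδr
  have hcolq : Collinear ℝ ({q, x₁, w} : Set (EuclideanSpace ℝ (Fin n))) := by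
    apply (collinear_iff_of_mem (Set.mem_insert q _)).mpr
    refine ⟨w - q, ?_⟩
    intro pt hpt
    rcases hpt with rfl | rfl | rfl
    · exact ⟨0, by simp [vadd_eq_add]⟩
    · exact ⟨t, by rw [hx₁]; simp [vadd_eq_add, add_comm]⟩
    · exact ⟨1, by simp [vadd_eq_add]⟩
  have hmem : dist x₁ w ∈ chordSet K q := ⟨x₁, hx₁K, w, hwK, hcolq, rfl⟩
  have hge : dist x₁ w ≤ eFn K q := le_csSup (chordSet_bddAbove hKc q) hmem
  have hlen : dist x₁ w = (1-t) * dist q w := by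
    rw [dist_eq_norm, dist_eq_norm]
    have : x₁ - w = (1-t) • (q - w) := by rw [hx₁]; module
    rw [this, norm_smul, Real.norm_eq_abs, abs_of_nonneg (by linarith : (0:ℝ) ≤ 1-t)]
  have hwz : dist w z = s * D := by
    rw [dist_eq_norm, hw]
    have : z + s • (c - z) - z = s • (c - z) := by module
    rw [this, norm_smul, Real.norm_eq_abs, abs_of_pos hs0, hD, dist_comm, dist_eq_norm]
  have hpw : P - s*D ≤ dist p w := by
    have h3 := dist_triangle p w z
    rw [hwz] at h3
    rw [hP]
    linarith
  have hqw : dist p w - δ ≤ dist q w := by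
    have := dist_triangle p q w
    have hq' : dist p q < δ := by rw [dist_comm]; exact hq
    linarith
  have hmono : (1-t) * (P - s*D - δ) ≤ (1-t) * dist q w := by
    apply mul_le_mul_of_nonneg_left (by linarith) (by linarith)
  have hz' : eFn K p - e/4 < P := hz
  have hexpand : (1-t) * (P - s*D - δ) = P - s*D - δ - t*P + t*(s*D) + t*δ := by ring
  have hfinal : eFn K p - e ≤ (1-t) * (P - s*D - δ) := by
    rw [hexpand]
    linarith [mul_nonneg ht0.le (mul_nonneg hs0.le hD0), mul_nonneg ht0.le hδ0.le]
  rw [hlen] at hge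
  linarith

theorem eFn_continuity_endpoint_extreme {n : ℕ} (hn : 2 ≤ n)
    (K : Set (EuclideanSpace ℝ (Fin n)))
    (hKc : IsCompact K) (hKconv : Convex ℝ K) (hKint : (interior K).Nonempty)
    (O : EuclideanSpace ℝ (Fin n)) (hO : O ∈ frontier K)
    (hcont : ContinuousAt (eFn K) O)
    (O' : EuclideanSpace ℝ (Fin n)) (hO' : O' ∈ frontier K)
    (heq : eFn K O = dist O O') :
    O' ∈ K.extremePoints ℝ ∧
    ∀ x ∈ K.extremePoints ℝ, ContinuousAt (eFn K) x := by
  have hclosed : IsClosed K := hKc.isClosed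
  have hOK : O ∈ K := hclosed.frontier_subset hO
  have hO'K : O' ∈ K := hclosed.frontier_subset hO'
  have hKne : K.Nonempty := ⟨O, hOK⟩
  have hext : O' ∈ K.extremePoints ℝ := by
    rw [mem_extremePoints]
    refine ⟨hO'K, fun x₁ hx₁ x₂ hx₂ hseg => ?_⟩
    by_cases hxx : x₁ = x₂
    · subst hxx
      rw [openSegment_same] at hseg
      rw [Set.mem_singleton_iff] at hseg
      exact ⟨hseg.symm, hseg.symm⟩
    · exfalso
      obtain ⟨a, b, ha, hb, hab, habO⟩ := hseg
      set u : EuclideanSpace ℝ (Fin n) := O - x₁ with hu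
      set v : EuclideanSpace ℝ (Fin n) := O - x₂ with hv
      set m : ℝ := max (dist O x₁) (dist O x₂) with hm
      have hum : ‖u‖ ≤ m := by rw [hu, ← dist_eq_norm]; exact le_max_left _ _
      have hvm : ‖v‖ ≤ m := by rw [hv, ← dist_eq_norm]; exact le_max_right _ _
      have hOO' : O - O' = a • u + b • v := by
        rw [← habO, hu, hv]
        have h0 : (1:ℝ) - a - b = 0 := by linarith
        have hkey : O - (a • x₁ + b • x₂)
            = a • (O - x₁) + b • (O - x₂) + ((1:ℝ) - a - b) • O := by module
        rw [hkey, h0, zero_smul, add_zero]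
      have hd1 : dist O O' ≤ a * ‖u‖ + b * ‖v‖ := by
        rw [dist_eq_norm, hOO']
        calc ‖a • u + b • v‖ ≤ ‖a • u‖ + ‖b • v‖ := norm_add_le _ _
          _ = a * ‖u‖ + b * ‖v‖ := by
              rw [norm_smul, norm_smul, Real.norm_eq_abs, Real.norm_eq_abs,
                abs_of_pos ha, abs_of_pos hb]
      have hd2 : a * ‖u‖ + b * ‖v‖ ≤ m := by
        calc a * ‖u‖ + b * ‖v‖ ≤ a * m + b * m :=
              add_le_add (mul_le_mul_of_nonneg_left hum ha.le)
                (mul_le_mul_of_nonneg_left hvm hb.le)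
          _ = m := by rw [← add_mul, hab, one_mul]
      have hd3 : m ≤ eFn K O :=
        max_le (dist_le_eFn hKc hOK hx₁) (dist_le_eFn hKc hOK hx₂)
      have hmeq : m = dist O O' := le_antisymm (heq ▸ hd3) (le_trans hd1 hd2)
      have hnormsum : a * ‖u‖ + b * ‖v‖ = m := by
        rw [hmeq]
        exact le_antisymm (hmeq ▸ hd2) hd1
      have hunorm : ‖u‖ = m ∧ ‖v‖ = m := by
        constructor
        · by_contra hne
          have hlt : ‖u‖ < m := lt_of_le_of_ne hum hne
          have h5 := mul_lt_mul_of_pos_left hlt ha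
          have h6 := mul_le_mul_of_nonneg_left hvm hb.le
          have h7 : a*m + b*m = m := by rw [← add_mul, hab, one_mul]
          linarith
        · by_contra hne
          have hlt : ‖v‖ < m := lt_of_le_of_ne hvm hne
          have h5 := mul_lt_mul_of_pos_left hlt hb
          have h6 := mul_le_mul_of_nonneg_left hum ha.le
          have h7 : a*m + b*m = m := by rw [← add_mul, hab, one_mul]
          linarith
      have hOO'norm : ‖a • u + b • v‖ = m := by
        rw [← hOO', ← dist_eq_norm, hmeq]
      have hinn : ⟪u, v⟫ = ‖u‖ * ‖v‖ := by
        have hexp : ‖a • u + b • v‖^2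
            = (a*‖u‖)^2 + 2*(a*b*⟪u,v⟫) + (b*‖v‖)^2 := by
          rw [norm_add_sq_real, norm_smul, norm_smul, real_inner_smul_left,
            real_inner_smul_right, Real.norm_eq_abs, Real.norm_eq_abs,
            abs_of_pos ha, abs_of_pos hb]
          ring
        have hCS : ⟪u,v⟫ ≤ ‖u‖ * ‖v‖ := real_inner_le_norm u v
        rw [hunorm.1, hunorm.2]
        rw [hOO'norm, hunorm.1, hunorm.2] at hexp
        have hab0 : (2:ℝ)*(a*b) ≠ 0 := by positivity
        apply mul_left_cancel₀ hab0
        linear_combination (-1 : ℝ) * hexp + (-(m*m)*(a+b+1))*hab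
      have hcan := inner_eq_norm_mul_iff_real.mp hinn
      rw [hunorm.1, hunorm.2] at hcan
      by_cases hm0 : m = 0
      · have hu0 : u = 0 := by
          rw [← norm_eq_zero]; rw [hunorm.1, hm0]
        have hv0 : v = 0 := by
          rw [← norm_eq_zero]; rw [hunorm.2, hm0]
        apply hxx
        have h1 : O = x₁ := by rwa [hu, sub_eq_zero] at hu0
        have h2 : O = x₂ := by rwa [hv, sub_eq_zero] at hv0
        rw [← h1, ← h2]
      · have huv : u = v := smul_right_injective _ hm0 hcan
        apply hxx
        have h7 : O - x₁ = O - x₂ := by rw [← hu, ← hv, huv]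
        exact sub_right_inj.mp h7
  refine ⟨hext, fun x hx => ?_⟩
  rw [Metric.continuousAt_iff]
  intro ε hε
  obtain ⟨d1, hd1, h1⟩ := eFn_usc hKc hKne x (half_pos hε)
  obtain ⟨d2, hd2, h2⟩ := eFn_lsc_extreme hKc hKconv hKint hx (half_pos hε)
  refine ⟨min d1 d2, lt_min hd1 hd2, fun q hq => ?_⟩
  rw [Real.dist_eq, abs_sub_lt_iff]
  have hu := h1 q (lt_of_lt_of_le hq (min_le_left _ _))
  have hl := h2 q (lt_of_lt_of_le hq (min_le_right _ _))
  constructor <;> linarith
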